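/- Let (X_z)_{z∈ℤ²} be independent, identically distributed nonnegative random variables with E(e^{c X_0}) < ∞ for some constant c > 0. Then there exist constants b1, b2 > 0 such that for every integer s ≥ 1, P(M_s(X) > b1·s) ≤ e^{−b2·s}. -/

import Mathlib

open MeasureTheory ProbabilityTheory

/-- Nearest-neighbor adjacency on `ℤ²`: `z` and `w` are at `ℓ¹`-distance `1`. -/
def LatAdj (z w : ℤ × ℤ) : Prop := (z.1 - w.1).natAbs + (z.2 - w.2).natAbs = 1

/-- A lattice animal: a finite subset of `ℤ²` containing the origin and connected
with respect to nearest-neighbor adjacency. -/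
def IsLatticeAnimal (A : Finset (ℤ × ℤ)) : Prop :=
  (0, 0) ∈ A ∧
    ∀ z ∈ A, Relation.ReflTransGen (fun a b => LatAdj a b ∧ a ∈ A ∧ b ∈ A) (0, 0) z

lemma latAdj_symm {a b : ℤ × ℤ} (h : LatAdj a b) : LatAdj b a := by
  unfold LatAdj at *; omega

lemma latAdj_ne {a b : ℤ × ℤ} (h : LatAdj a b) : a ≠ b := by
  rintro rfl; unfold LatAdj at h; omega

lemma exists_walk : ∀ (n : ℕ) (A : Finset (ℤ × ℤ)), A.card = n → IsLatticeAnimal A →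
    ∃ L : List (ℤ × ℤ), L.Chain' LatAdj ∧ L.head? = some (0,0) ∧ L.toFinset = A ∧
      L.length + 1 ≤ 2 * A.card := by
  intro n
  induction n using Nat.strong_induction_on with
  | _ n ih =>
  intro A hcard hA
  set r := fun a b => LatAdj a b ∧ a ∈ A ∧ b ∈ A with hr
  rcases Nat.lt_or_ge n 2 with hn2 | hn2
  · -- n ≤ 1; since A nonempty, n = 1 and A = {0}
    have h0 : (0,0) ∈ A := hA.1
    have hpos : 0 < A.card := Finset.card_pos.mpr ⟨_, h0⟩
    have hn1 : n = 1 := by omega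
    have hAeq : A = {(0,0)} := by
      rw [hn1] at hcard
      obtain ⟨a, ha⟩ := Finset.card_eq_one.mp hcard
      rw [ha] at h0 ⊢
      simp at h0
      rw [← h0]
    refine ⟨[(0,0)], List.IsChain.singleton _, by simp, by simp [hAeq], by simp [hcard, hn1]⟩
  · -- main case
    classical
    set C : ℤ × ℤ → Set ℕ := fun z => {k | ∃ l : List (ℤ × ℤ), List.Chain r (0,0) l ∧
        l.length = k ∧ ((0,0)::l).getLast? = some z} with hC
    set D : ℤ × ℤ → ℕ := fun z => sInf (C z) with hD
    have hmem : ∀ z ∈ A, D z ∈ C z := by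
      intro z hz
      obtain ⟨l, hl, hlast⟩ := List.exists_isChain_cons_of_relationReflTransGen (hA.2 z hz)
      refine Nat.sInf_mem ⟨l.length, l, hl, rfl, ?_⟩
      rw [List.getLast?_eq_getLast_of_ne_nil (List.cons_ne_nil _ _), hlast]
    have hD0 : D (0,0) = 0 :=
      Nat.le_zero.mp (Nat.sInf_le ⟨[], List.Chain.nil, rfl, rfl⟩)
    have hne : (A.erase (0,0)).Nonempty := by
      rw [← Finset.card_pos, Finset.card_erase_of_mem hA.1]; omega
    obtain ⟨v, hv, hvmax⟩ := Finset.exists_max_image (A.erase (0,0)) D hne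
    obtain ⟨hv0, hvA⟩ := Finset.mem_erase.mp hv
    have key : ∀ u ∈ A, u ≠ v → ∃ l : List (ℤ × ℤ), List.Chain r (0,0) l ∧
        ((0,0)::l).getLast? = some u ∧ v ∉ (0,0)::l := by
      intro u hu huv
      obtain ⟨l, hl, hlen, hlast⟩ := hmem u hu
      refine ⟨l, hl, hlast, ?_⟩
      intro hvl
      have hvl' : v ∈ l := by
        rcases List.mem_cons.mp hvl with h | h
        · exact absurd h hv0
        · exact h
      obtain ⟨p, q, rfl⟩ := List.append_of_mem hvl'
      have hsplit := List.isChain_cons_split.mp hl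
      have hDv : D v ≤ p.length + 1 := by
        apply Nat.sInf_le
        refine ⟨p ++ [v], hsplit.1, by simp, ?_⟩
        have : ((0,0) :: (p ++ [v]) : List (ℤ × ℤ)) = ((0,0) :: p) ++ v :: [] := by simp
        rw [this, List.getLast?_append_cons]
        rfl
      have hlast' : (v :: q).getLast? = some u := by
        have h2 : ((0,0) :: (p ++ v :: q) : List (ℤ × ℤ)) = ((0,0) :: p) ++ v :: q := by simp
        rw [h2, List.getLast?_append_cons] at hlast
        exact hlast
      have hq : q ≠ [] := by
        rintro rfl
        simp [List.getLast?] at hlast'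
        exact huv hlast'.symm
      have hqlen : 1 ≤ q.length := List.length_pos_iff.mpr hq
      rcases eq_or_ne u (0,0) with rfl | hu0
      · have h3 : (p ++ v :: q).length = D (0,0) := hlen
        rw [hD0] at h3
        simp at h3
      · have humax : D u ≤ D v := hvmax u (Finset.mem_erase.mpr ⟨hu0, hu⟩)
        have h3 : (p ++ v :: q).length = D u := hlen
        simp at h3
        omega
    have chain_str : ∀ (l : List (ℤ × ℤ)) (a : ℤ × ℤ), List.Chain r a l → a ∈ A.erase v →
        (∀ x ∈ l, x ≠ v) → List.Chain
          (fun x y => LatAdj x y ∧ x ∈ A.erase v ∧ y ∈ A.erase v) a l := by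
      intro l
      induction l with
      | nil => intro a _ _ _; exact List.Chain.nil
      | cons b t ihl =>
        intro a hchain ha hx
        unfold List.Chain at hchain ⊢
        rw [List.isChain_cons_cons] at hchain ⊢
        obtain ⟨⟨hadj, _, hbA⟩, htail⟩ := hchain
        have hb : b ∈ A.erase v := Finset.mem_erase.mpr ⟨hx b (by simp), hbA⟩
        exact ⟨⟨hadj, ha, hb⟩, ihl b htail hb (fun x hxt => hx x (by simp [hxt]))⟩
    have hA' : IsLatticeAnimal (A.erase v) := by
      constructor
      · exact Finset.mem_erase.mpr ⟨Ne.symm hv0, hA.1⟩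
      · intro u hu
        obtain ⟨huv, huA⟩ := Finset.mem_erase.mp hu
        obtain ⟨l, hl, hlast, hvnot⟩ := key u huA huv
        apply List.relationReflTransGen_of_exists_isChain_cons l
        · exact chain_str l _ hl (Finset.mem_erase.mpr ⟨Ne.symm hv0, hA.1⟩)
            (fun x hx => by rintro rfl; exact hvnot (by simp [hx]))
        · rw [List.getLast?_eq_getLast_of_ne_nil (List.cons_ne_nil _ _)] at hlast
          exact Option.some_injective _ hlast
    have hvnb : ∃ u ∈ A.erase v, LatAdj u v := by
      rcases (hA.2 v hvA).cases_tail with h | ⟨w, _, hw⟩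
      · exact absurd h hv0
      · exact ⟨w, Finset.mem_erase.mpr ⟨latAdj_ne hw.1, hw.2.1⟩, hw.1⟩
    obtain ⟨u, hu, huadj⟩ := hvnb
    have hcard' : (A.erase v).card = n - 1 := by
      rw [Finset.card_erase_of_mem hvA, hcard]
    obtain ⟨L', hc', hh', ht', hlen'⟩ := ih (n-1) (by omega) (A.erase v) hcard' hA'
    have huL : u ∈ L' := List.mem_toFinset.mp (ht' ▸ hu)
    obtain ⟨P, S, hPS⟩ := List.append_of_mem huL
    refine ⟨P ++ u :: v :: u :: S, ?_, ?_, ?_, ?_⟩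
    · rw [hPS] at hc'
      obtain ⟨c1, c2⟩ := List.isChain_split.mp hc'
      exact List.isChain_split.mpr ⟨c1, List.isChain_cons_cons.mpr ⟨huadj,
        List.isChain_cons_cons.mpr ⟨latAdj_symm huadj, c2⟩⟩⟩
    · rw [hPS] at hh'
      cases P with
      | nil => simpa using hh'
      | cons p P' => simpa using hh'
    · rw [hPS] at ht'
      have hins : (P ++ u :: v :: u :: S).toFinset = insert v (P ++ u :: S).toFinset := by
        ext x; simp; try tauto
      rw [hins, ht', Finset.insert_erase hvA]
    · rw [hPS, hcard'] at hlen'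
      simp only [List.length_append, List.length_cons] at hlen' ⊢
      rw [hcard]
      omega

def dir5 : Fin 5 → ℤ × ℤ := ![(1,0),(-1,0),(0,1),(0,-1),(0,0)]

def stp (p : ℤ × ℤ) (d : Fin 5) : ℤ × ℤ := p + dir5 d

lemma latAdj_exists_dir {a b : ℤ × ℤ} (h : LatAdj a b) : ∃ d : Fin 5, b = stp a d := by
  unfold LatAdj at h
  have h' : (b.1 - a.1 = 1 ∧ b.2 - a.2 = 0) ∨ (b.1 - a.1 = -1 ∧ b.2 - a.2 = 0)
      ∨ (b.1 - a.1 = 0 ∧ b.2 - a.2 = 1) ∨ (b.1 - a.1 = 0 ∧ b.2 - a.2 = -1) := by omega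
  rcases h' with ⟨h1,h2⟩|⟨h1,h2⟩|⟨h1,h2⟩|⟨h1,h2⟩
  · exact ⟨0, by simp [stp, dir5, Prod.ext_iff]; omega⟩
  · exact ⟨1, by simp [stp, dir5, Prod.ext_iff]; omega⟩
  · exact ⟨2, by simp [stp, dir5, Prod.ext_iff]; omega⟩
  · exact ⟨3, by simp [stp, dir5, Prod.ext_iff]; omega⟩

lemma stp4 (a : ℤ × ℤ) : stp a 4 = a := by
  simp [stp, dir5]

lemma chain_to_moves : ∀ (t : List (ℤ × ℤ)) (a : ℤ × ℤ), List.Chain LatAdj a t →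
    ∃ d : List (Fin 5), d.length = t.length ∧ List.scanl stp a d = a :: t := by
  intro t
  induction t with
  | nil => exact fun a _ => ⟨[], rfl, rfl⟩
  | cons b t iht =>
    intro a hchain
    unfold List.Chain at hchain
    rw [List.isChain_cons_cons] at hchain
    obtain ⟨d0, hd0⟩ := latAdj_exists_dir hchain.1
    obtain ⟨d, hdl, hds⟩ := iht b hchain.2
    refine ⟨d0 :: d, by simp [hdl], ?_⟩
    rw [List.scanl_cons, ← hd0, hds]

lemma scanl_replicate (k : ℕ) (a : ℤ × ℤ) :
    List.scanl stp a (List.replicate k 4) = List.replicate (k+1) a := by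
  induction k generalizing a with
  | zero => rfl
  | succ k ih =>
    rw [List.replicate_succ, List.scanl_cons, stp4, ih]
    rw [List.replicate_succ]
    rfl

lemma scanl_pad (k : ℕ) : ∀ (d : List (Fin 5)) (a : ℤ × ℤ),
    (List.scanl stp a (d ++ List.replicate k 4)).toFinset = (List.scanl stp a d).toFinset := by
  intro d
  induction d with
  | nil =>
    intro a
    simp [scanl_replicate, List.toFinset_replicate_of_ne_zero]
  | cons d0 d ih =>
    intro a
    rw [List.cons_append, List.scanl_cons, List.scanl_cons]
    simp [List.toFinset_append, ih]

/-- decode a move list to a set of sites -/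
def decMoves (d : List (Fin 5)) : Finset (ℤ × ℤ) := (List.scanl stp (0,0) d).toFinset

lemma decMoves_card (d : List (Fin 5)) : (decMoves d).card ≤ d.length + 1 := by
  refine le_trans (List.toFinset_card_le _) ?_
  rw [List.length_scanl]

lemma animal_encode (s : ℕ) (hs : 1 ≤ s) (A : Finset (ℤ × ℤ)) (hA : IsLatticeAnimal A)
    (hcard : A.card ≤ s) : ∃ w : List.Vector (Fin 5) (2*s), decMoves w.1 = A := by
  obtain ⟨L, hc, hh, ht, hlen⟩ := exists_walk A.card A rfl hA
  match L, hh with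
  | (a :: t), hh =>
    have ha : a = (0,0) := by simpa using hh
    subst ha
    have hchain : List.Chain LatAdj (0,0) t := hc
    obtain ⟨d, hdl, hds⟩ := chain_to_moves t (0,0) hchain
    have hdlen : d.length ≤ 2 * s := by
      simp only [List.length_cons] at hlen
      omega
    refine ⟨⟨d ++ List.replicate (2*s - d.length) 4, by simp; omega⟩, ?_⟩
    show decMoves (d ++ List.replicate (2*s - d.length) 4) = A
    unfold decMoves
    rw [scanl_pad, hds, ht]

/-- If `(X_z)_{z ∈ ℤ²}` are i.i.d. nonnegative random variables with
`E(e^{c X₀}) < ∞` for some `c > 0`, then there are `b1, b2 > 0` such that for every `s ≥ 1`,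
`P(M_s(X) > b1 s) ≤ e^{-b2 s}`, where `M_s(X)` is the maximal total weight of a lattice
animal with at most `s` sites. -/
theorem stmt1
    {Ω : Type*} [MeasurableSpace Ω] (μ : Measure Ω) [IsProbabilityMeasure μ]
    (X : ℤ × ℤ → Ω → ℝ)
    (hmeas : ∀ z, Measurable (X z))
    (hindep : iIndepFun X μ)
    (hident : ∀ z, IdentDistrib (X z) (X (0, 0)) μ μ)
    (hnonneg : ∀ z ω, 0 ≤ X z ω)
    (hexp : ∃ c > 0, Integrable (fun ω => Real.exp (c * X (0, 0) ω)) μ) :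
    ∃ b1 > 0, ∃ b2 > 0, ∀ s : ℕ, 1 ≤ s →
      μ {ω | ∃ A : Finset (ℤ × ℤ), IsLatticeAnimal A ∧ A.card ≤ s ∧
          b1 * s < ∑ z ∈ A, X z ω} ≤ ENNReal.ofReal (Real.exp (-b2 * s)) := by
  classical
  obtain ⟨c, hc, hint⟩ := hexp
  set Y : ℤ × ℤ → Ω → ℝ := fun z ω => Real.exp (c * X z ω) with hYdef
  have hYmeas : ∀ z, Measurable (Y z) :=
    fun z => Real.measurable_exp.comp ((hmeas z).const_mul c)
  have hYid : ∀ z, IdentDistrib (Y z) (Y (0,0)) μ μ := fun z =>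
    (hident z).comp (Real.measurable_exp.comp (measurable_id.const_mul c))
  have hYint : ∀ z, Integrable (Y z) μ := fun z => (hYid z).integrable_iff.mpr hint
  set m := ∫ ω, Y (0,0) ω ∂μ with hm
  have hYeq : ∀ z, ∫ ω, Y z ω ∂μ = m := fun z => (hYid z).integral_eq
  have hm1 : (1:ℝ) ≤ m := by
    have h1 : ∫ (_ : Ω), (1:ℝ) ∂μ = 1 := by simp
    rw [← h1]
    apply integral_mono (integrable_const 1) hint
    intro ω
    simpa using Real.one_le_exp (mul_nonneg hc.le (hnonneg _ ω))
  have hm0 : (0:ℝ) < m := lt_of_lt_of_le one_pos hm1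
  have hYindep : iIndepFun Y μ :=
    hindep.comp (fun _ x => Real.exp (c * x))
      (fun _ => Real.measurable_exp.comp (measurable_id.const_mul c))
  have prod_key : ∀ S : Finset (ℤ × ℤ), Integrable (∏ z ∈ S, Y z) μ ∧
      ∫ ω, (∏ z ∈ S, Y z) ω ∂μ = m ^ S.card := by
    intro S
    induction S using Finset.cons_induction with
    | empty =>
      refine ⟨?_, by simp⟩
      rw [Finset.prod_empty]; exact integrable_const (1:ℝ)
    | cons a S ha ih =>
      have hind : IndepFun (∏ z ∈ S, Y z) (Y a) μ :=
        hYindep.indepFun_finsetProd_of_notMem hYmeas ha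
      constructor
      · rw [Finset.prod_cons]
        exact hind.symm.integrable_mul (hYint a) ih.1
      · rw [Finset.prod_cons, Finset.card_cons]
        have := hind.symm.integral_mul_eq_mul_integral (hYint a).aestronglyMeasurable ih.1.aestronglyMeasurable
        calc ∫ ω, (Y a * ∏ z ∈ S, Y z) ω ∂μ
            = (∫ ω, Y a ω ∂μ) * ∫ ω, (∏ z ∈ S, Y z) ω ∂μ := this
          _ = m ^ (S.card + 1) := by rw [hYeq a, ih.2]; ring
  have chern : ∀ (S : Finset (ℤ × ℤ)) (a : ℝ), 0 ≤ a →
      μ {ω | a < ∑ z ∈ S, X z ω} ≤ ENNReal.ofReal (Real.exp (-(c*a)) * m ^ S.card) := by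
    intro S a ha
    set g : Ω → ℝ := ∏ z ∈ S, Y z with hg
    have hgnn : ∀ ω, 0 ≤ g ω := fun ω => by
      rw [hg, Finset.prod_apply]
      exact Finset.prod_nonneg (fun z _ => (Real.exp_pos _).le)
    have hsub : {ω | a < ∑ z ∈ S, X z ω} ⊆ {ω | Real.exp (c*a) ≤ g ω} := by
      intro ω hω
      simp only [Set.mem_setOf_eq] at hω ⊢
      have hle : c * a ≤ c * ∑ z ∈ S, X z ω := by nlinarith
      calc Real.exp (c*a) ≤ Real.exp (c * ∑ z ∈ S, X z ω) := Real.exp_le_exp.mpr hle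
        _ = g ω := by rw [Finset.mul_sum, Real.exp_sum, hg, Finset.prod_apply]
    have hmark := mul_meas_ge_le_integral_of_nonneg (ae_of_all μ hgnn)
      (prod_key S).1 (Real.exp (c*a))
    rw [show ∫ x, g x ∂μ = m ^ S.card from (prod_key S).2] at hmark
    have hfin : μ {x | Real.exp (c*a) ≤ g x} ≠ ⊤ := measure_ne_top μ _
    refine le_trans (measure_mono hsub) ?_
    rw [← ENNReal.ofReal_toReal hfin]
    apply ENNReal.ofReal_le_ofReal
    rw [Real.exp_neg]
    have hepos : (0:ℝ) < Real.exp (c*a) := Real.exp_pos _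
    rw [inv_mul_eq_div, le_div_iff₀ hepos]
    rw [measureReal_def] at hmark
    linarith [hmark]
  -- choose constants
  have h25 : (0:ℝ) < Real.log 25 := Real.log_pos (by norm_num)
  have hlm : (0:ℝ) ≤ Real.log m := Real.log_nonneg hm1
  set b1 := (Real.log 25 + 3 * Real.log m + 1)/c with hb1def
  have hb1 : 0 < b1 := div_pos (by linarith) hc
  refine ⟨b1, hb1, 1, one_pos, ?_⟩
  intro s hs
  have hscast : (1:ℝ) ≤ (s:ℝ) := by exact_mod_cast hs
  -- inclusion into finite union
  have hincl : {ω | ∃ A : Finset (ℤ × ℤ), IsLatticeAnimal A ∧ A.card ≤ s ∧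
        b1 * s < ∑ z ∈ A, X z ω}
      ⊆ ⋃ w : List.Vector (Fin 5) (2*s), {ω | b1 * s < ∑ z ∈ decMoves w.1, X z ω} := by
    rintro ω ⟨A, hA, hAcard, hAsum⟩
    obtain ⟨w, hw⟩ := animal_encode s hs A hA hAcard
    exact Set.mem_iUnion.mpr ⟨w, by rw [Set.mem_setOf_eq, hw]; exact hAsum⟩
  set B := ENNReal.ofReal (Real.exp (-(c*(b1*s))) * m ^ (2*s+1)) with hB
  have hperw : ∀ w : List.Vector (Fin 5) (2*s),
      μ {ω | b1 * s < ∑ z ∈ decMoves w.1, X z ω} ≤ B := by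
    intro w
    refine le_trans (chern (decMoves w.1) (b1 * s)
      (mul_nonneg hb1.le (Nat.cast_nonneg s))) ?_
    apply ENNReal.ofReal_le_ofReal
    apply mul_le_mul_of_nonneg_left _ (Real.exp_nonneg _)
    apply pow_le_pow_right₀ hm1
    have := decMoves_card w.1
    rw [w.2] at this
    omega
  calc μ {ω | ∃ A : Finset (ℤ × ℤ), IsLatticeAnimal A ∧ A.card ≤ s ∧
        b1 * s < ∑ z ∈ A, X z ω}
      ≤ μ (⋃ w : List.Vector (Fin 5) (2*s),
          {ω | b1 * s < ∑ z ∈ decMoves w.1, X z ω}) := measure_mono hincl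
    _ ≤ ∑' w : List.Vector (Fin 5) (2*s),
          μ {ω | b1 * s < ∑ z ∈ decMoves w.1, X z ω} := measure_iUnion_le _
    _ = ∑ w : List.Vector (Fin 5) (2*s),
          μ {ω | b1 * s < ∑ z ∈ decMoves w.1, X z ω} := tsum_fintype _
    _ ≤ (Finset.univ : Finset (List.Vector (Fin 5) (2*s))).card • B :=
        Finset.sum_le_card_nsmul _ _ _ (fun w _ => hperw w)
    _ = (5^(2*s) : ℕ) * B := by
        rw [Finset.card_univ, card_vector]
        simp [nsmul_eq_mul]
    _ ≤ ENNReal.ofReal (Real.exp (-1 * s)) := by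
        rw [hB, ← ENNReal.ofReal_natCast (5^(2*s)),
          ← ENNReal.ofReal_mul (by positivity)]
        apply ENNReal.ofReal_le_ofReal
        push_cast
        -- real inequality
        have hcb1 : c * b1 = Real.log 25 + 3 * Real.log m + 1 := by
          rw [hb1def]; field_simp
        have hlog25 : Real.log 25 = 2 * Real.log 5 := by
          rw [show (25:ℝ) = 5^2 by norm_num, Real.log_pow]; push_cast; ring
        have h5 : (5:ℝ)^(2*s) = Real.exp ((2*s : ℕ) * Real.log 5) := by
          rw [Real.exp_nat_mul, Real.exp_log (by norm_num)]
        have hmp : m^(2*s+1) = Real.exp ((2*s+1 : ℕ) * Real.log m) := by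
          rw [Real.exp_nat_mul, Real.exp_log hm0]
        rw [h5, hmp, ← Real.exp_add, ← Real.exp_add]
        apply Real.exp_le_exp.mpr
        push_cast
        rw [show c * (b1 * s) = (c * b1) * s by ring, hcb1, hlog25]
        nlinarith [mul_nonneg (sub_nonneg.mpr hscast) hlm]
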